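/- With the above construction, let j ∈ {1,…,T−1}, let 1 ≤ i ≤ T, let a_i,…,a_T ∈ Γ, and let u < B^T be a natural number all of whose base-B digits are at most (s+1)·k. Set W' = (Σ_{r=i}^{T} g(a_r)·B^{T−r})·B^{(T−j)·T} + u·B^{(T−j−1)·T}. Then c_copy(a_i, i, j) ≤ W', and c_copy(a_i, i, j) is the largest coin in 𝒞 not exceeding W'; hence it is the coin selected by the greedy procedure at remaining amount W'. -/
import Mathlib

private lemma icc_split (lo T : ℕ) (h : lo ≤ T) (F : ℕ → ℕ) :
    ∑ r ∈ Finset.Icc lo T, F r = F lo + ∑ r ∈ Finset.Icc (lo+1) T, F r := by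
  rw [show Finset.Icc lo T = insert lo (Finset.Icc (lo+1) T) from by
        ext r; simp only [Finset.mem_insert, Finset.mem_Icc]; omega,
      Finset.sum_insert (by simp only [Finset.mem_Icc]; omega)]

private lemma digit_sum_le (B T : ℕ) (hB : 2 ≤ B) (d : ℕ → ℕ) (hd : ∀ r, d r ≤ B - 2) :
    ∀ n i, T ≤ i + n → 1 ≤ i →
      (∑ r ∈ Finset.Icc i T, d r * B ^ (T - r)) + 1 ≤ (B - 1) * B ^ (T - i) := by
  intro n
  induction n with
  | zero =>
    intro i hT hi
    rcases Nat.lt_or_ge T i with h | h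
    · rw [Finset.Icc_eq_empty (by omega)]
      simp only [Finset.sum_empty]
      have h1 : 1 ≤ B ^ (T - i) := Nat.one_le_pow _ _ (by omega)
      have h2 : 1 * 1 ≤ (B - 1) * B ^ (T - i) := Nat.mul_le_mul (by omega) h1
      omega
    · have hiT : i = T := by omega
      subst hiT
      rw [Finset.Icc_self, Finset.sum_singleton]
      simp only [Nat.sub_self, pow_zero, mul_one]
      have := hd i
      omega
  | succ n ih =>
    intro i hT hi
    rcases le_or_gt T (i + n) with h | h
    · exact ih i h hi
    · have hiT : i < T := by omega
      rw [icc_split i T (by omega)]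
      have h2 := ih (i + 1) (by omega) (by omega)
      have hpow : B ^ (T - i) = B ^ (T - i - 1) * B := by
        rw [← pow_succ]; congr 1; omega
      have hpow2 : B ^ (T - (i+1)) = B ^ (T - i - 1) := by congr 1
      rw [hpow2] at h2
      have hP : 1 ≤ B ^ (T - i - 1) := Nat.one_le_pow _ _ (by omega)
      have hdi := hd i
      rw [hpow]
      obtain ⟨C, hC⟩ : ∃ C, B = C + 2 := ⟨B - 2, by omega⟩
      subst hC
      have e1 : C + 2 - 1 = C + 1 := by omega
      have e2 : C + 2 - 2 = C := by omega
      rw [e1]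
      rw [e1] at h2
      rw [e2] at hdi
      set P := (C + 2) ^ (T - i - 1) with hPdef
      nlinarith [h2, hP, hdi, mul_le_mul_left hdi (P * (C + 2))]

private lemma three_digit_lt (B e d1 d2 d3 : ℕ) (hB : 2 ≤ B)
    (h1 : d1 ≤ B - 2) (h2 : d2 ≤ B - 2) (h3 : d3 ≤ B - 2) :
    d1 * B ^ (e + 2) + d2 * B ^ (e + 1) + d3 * B ^ e + 1 ≤ B ^ (e + 3) := by
  have hy : 1 ≤ B ^ e := Nat.one_le_pow _ _ (by omega)
  obtain ⟨C, hC⟩ : ∃ C, B = C + 2 := ⟨B - 2, by omega⟩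
  subst hC
  have e2 : C + 2 - 2 = C := by omega
  rw [e2] at h1 h2 h3
  set y := (C + 2) ^ e with hy'
  have E1 : (C + 2) ^ (e + 1) = y * (C + 2) := by rw [hy', ← pow_succ]
  have E2 : (C + 2) ^ (e + 2) = y * (C + 2) * (C + 2) := by rw [hy']; ring
  have E3 : (C + 2) ^ (e + 3) = y * (C + 2) * (C + 2) * (C + 2) := by rw [hy']; ring
  rw [E1, E2, E3]
  have key : d1 * ((C+2)*(C+2)) + d2 * (C+2) + d3 + 1 ≤ (C+2)*(C+2)*(C+2) := by nlinarith
  nlinarith [hy, mul_le_mul_left key y]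

private lemma two_digit_lt (B e d1 d2 : ℕ) (hB : 2 ≤ B)
    (h1 : d1 ≤ B - 2) (h2 : d2 ≤ B - 2) :
    d1 * B ^ (e + 1) + d2 * B ^ e + 1 ≤ B ^ (e + 2) := by
  have hy : 1 ≤ B ^ e := Nat.one_le_pow _ _ (by omega)
  obtain ⟨C, hC⟩ : ∃ C, B = C + 2 := ⟨B - 2, by omega⟩
  subst hC
  have e2 : C + 2 - 2 = C := by omega
  rw [e2] at h1 h2
  set y := (C + 2) ^ e with hy'
  have E1 : (C + 2) ^ (e + 1) = y * (C + 2) := by rw [hy', ← pow_succ]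
  have E2 : (C + 2) ^ (e + 2) = y * (C + 2) * (C + 2) := by rw [hy']; ring
  rw [E1, E2]
  have key : d1 * (C+2) + d2 + 1 ≤ (C+2)*(C+2) := by nlinarith
  nlinarith [hy, mul_le_mul_left key y]



/-- A deterministic single-tape Turing machine with a left endmarker `dollar` and a
blank symbol `blank`.  In the transition function, the direction `true` means the head
moves one cell to the right and `false` means one cell to the left. -/
structure TM (Q Γ : Type*) where
  δ : Q → Γ → Q × Γ × Bool
  q₀ : Q
  qacc : Q
  qrej : Q
  dollar : Γ
  blank : Γ

namespace TM

variable {Q Γ : Type*} [DecidableEq Q] [DecidableEq Γ]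

/-- `q` is a halting state. -/
def Halting (M : TM Q Γ) (q : Q) : Prop := q = M.qacc ∨ q = M.qrej

instance (M : TM Q Γ) (q : Q) : Decidable (M.Halting q) := by
  unfold Halting; infer_instance

/-- One step of the machine on a configuration `(state, head position, tape contents)`;
halting configurations are fixed points (so this computes `Δ(C)`). -/
def step (M : TM Q Γ) (c : Q × ℕ × (ℕ → Γ)) : Q × ℕ × (ℕ → Γ) :=
  if M.Halting c.1 then c
  else
    let r := M.δ c.1 (c.2.2 c.2.1)
    (r.1, if r.2.2 then c.2.1 + 1 else c.2.1 - 1, Function.update c.2.2 c.2.1 r.2.1)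

/-- The initial configuration on input `x` of length `n`: state `q₀`, head on cell `1`,
the left endmarker in cell `1`, the input symbols `x 1, …, x n` in cells `2, …, n+1`,
and blanks beyond. -/
def init (M : TM Q Γ) (x : ℕ → Γ) (n : ℕ) : Q × ℕ × (ℕ → Γ) :=
  (M.q₀, 1, fun r => if r = 1 then M.dollar else if r ≤ n + 1 then x (r - 1) else M.blank)

/-- The numeric encoding of a configuration in base `B` with `T` tape cells:
`val(C) = Σ_{r ≠ h} g(a_r)·B^(T−r) + (f(q)·k + g(a_h))·B^(T−h)`. -/
def val (f : Q → ℕ) (g : Γ → ℕ) (k B T : ℕ) (c : Q × ℕ × (ℕ → Γ)) : ℕ :=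
  ∑ r ∈ Finset.Icc 1 T,
    (if r = c.2.1 then f c.1 * k + g (c.2.2 r) else g (c.2.2 r)) * B ^ (T - r)

/-- `B^((T−j−1)·T)`, interpreted as `0` when `j = T` (or beyond). -/
def low (B T j : ℕ) : ℕ := if j < T then B ^ ((T - j - 1) * T) else 0

/-- Copy coin `c_copy(a, i, j)`. -/
def cCopy (g : Γ → ℕ) (B T : ℕ) (a : Γ) (i j : ℕ) : ℕ :=
  g a * B ^ (T - i) * B ^ ((T - j) * T) - g a * B ^ (T - i) * low B T j

/-- The higher-range part of a transition coin: digits `a⁻ (q a) a⁺` at positions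
`i−1, i, i+1`. -/
def transUpper (f : Q → ℕ) (g : Γ → ℕ) (k B T : ℕ) (q : Q) (am a ap : Γ) (i : ℕ) : ℕ :=
  g am * B ^ (T - i + 1) + (f q * k + g a) * B ^ (T - i) + g ap * B ^ (T - i - 1)

/-- The lower-range update `s'` of a transition coin. -/
def transLower (M : TM Q Γ) (f : Q → ℕ) (g : Γ → ℕ) (k B T : ℕ) (q : Q) (am a ap : Γ)
    (i : ℕ) : ℕ :=
  if M.Halting q then transUpper f g k B T q am a ap i
  else
    let r := M.δ q a
    if r.2.2 then
      g am * B ^ (T - i + 1) + g r.2.1 * B ^ (T - i) + (f r.1 * k + g ap) * B ^ (T - i - 1)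
    else
      (f r.1 * k + g am) * B ^ (T - i + 1) + g r.2.1 * B ^ (T - i) + g ap * B ^ (T - i - 1)

/-- Transition coin `c_trans(q, a⁻, a, a⁺, i, j)`. -/
def cTrans (M : TM Q Γ) (f : Q → ℕ) (g : Γ → ℕ) (k B T : ℕ) (q : Q) (am a ap : Γ)
    (i j : ℕ) : ℕ :=
  transUpper f g k B T q am a ap i * B ^ ((T - j) * T)
    - transLower M f g k B T q am a ap i * low B T j

/-- Left-end transition coin `c_left(q, a⁺, j)` (with `δ(q, $) = (q', $, R)`). -/
def cLeft (M : TM Q Γ) (f : Q → ℕ) (g : Γ → ℕ) (k B T : ℕ) (q : Q) (ap : Γ) (j : ℕ) : ℕ :=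
  ((f q * k + g M.dollar) * B ^ (T - 1) + g ap * B ^ (T - 2)) * B ^ ((T - j) * T)
    - (g M.dollar * B ^ (T - 1) + (f (M.δ q M.dollar).1 * k + g ap) * B ^ (T - 2)) * low B T j

/-- The coin set `𝒞` of the greedy coin change instance: all copy coins, transition
coins, and left-end transition coins with parameters in the prescribed ranges. -/
def coinSet (M : TM Q Γ) (f : Q → ℕ) (g : Γ → ℕ) (k B T : ℕ) : Set ℕ :=
  {c | (∃ a i j, 1 ≤ i ∧ i ≤ T ∧ 1 ≤ j ∧ j ≤ T ∧ c = cCopy g B T a i j) ∨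
       (∃ q am a ap i j, 2 ≤ i ∧ i ≤ T - 1 ∧ 1 ≤ j ∧ j ≤ T ∧
          c = cTrans M f g k B T q am a ap i j) ∨
       (∃ q ap j, ¬ M.Halting q ∧ 1 ≤ j ∧ j ≤ T ∧ c = cLeft M f g k B T q ap j)}

end TM

/-- The coin selected by the greedy procedure at remaining amount `w`: the largest coin
of `𝒞` not exceeding `w` (and `0` if no coin fits). -/
noncomputable def greedyPick (𝒞 : Set ℕ) (w : ℕ) : ℕ := sSup {c ∈ 𝒞 | c ≤ w}

/-- The remaining change amount after `t` steps of the greedy procedure starting from `W`. -/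
noncomputable def greedyRem (𝒞 : Set ℕ) (W : ℕ) : ℕ → ℕ
  | 0 => W
  | t + 1 => greedyRem 𝒞 W t - greedyPick 𝒞 (greedyRem 𝒞 W t)

/-- Case (2) of the simulation: at a remaining amount whose higher range holds the plain
tape symbols `a_i … a_T` (no state–alphabet pair) and whose lower range holds a partial
update `u < B^T` all of whose base-`B` digits are at most `(s+1)·k`, the copy coin
`c_copy(a_i, i, j)` does not exceed `W'` and is the largest coin of `𝒞` not exceeding
`W'`; hence it is the coin selected by the greedy procedure. -/
theorem copy_coin_is_greedy_choice
    {Q Γ : Type*} [Fintype Q] [Fintype Γ] [DecidableEq Q] [DecidableEq Γ]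
    (M : TM Q Γ) (f : Q → ℕ) (g : Γ → ℕ) (s k B T : ℕ)
    (hs : s = Fintype.card Q) (hk : k = Fintype.card Γ)
    (hfr : ∀ q, 1 ≤ f q ∧ f q ≤ s) (hgr : ∀ a, 1 ≤ g a ∧ g a ≤ k)
    (hfi : Function.Injective f) (hgi : Function.Injective g)
    (hB : (s + 1) * k + 2 ≤ B)
    (hdollar : ∀ q, (M.δ q M.dollar).2.1 = M.dollar ∧ (M.δ q M.dollar).2.2 = true)
    (j i : ℕ) (hj1 : 1 ≤ j) (hjT : j ≤ T - 1) (hi1 : 1 ≤ i) (hiT : i ≤ T)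
    (a : ℕ → Γ) (u : ℕ) (hu : u < B ^ T) (hud : ∀ r, u / B ^ r % B ≤ (s + 1) * k)
    (W' : ℕ)
    (hW' : W' = (∑ r ∈ Finset.Icc i T, g (a r) * B ^ (T - r)) * B ^ ((T - j) * T)
        + u * B ^ ((T - j - 1) * T)) :
    TM.cCopy g B T (a i) i j ≤ W' ∧
    IsGreatest {c | c ∈ TM.coinSet M f g k B T ∧ c ≤ W'} (TM.cCopy g B T (a i) i j) ∧
    greedyPick (TM.coinSet M f g k B T) W' = TM.cCopy g B T (a i) i j := by
  
  have hT2 : 2 ≤ T := by omega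
  have hjT' : j < T := by omega
  have hB2 : 2 ≤ B := le_trans (Nat.le_add_left 2 _) hB
  have hXk : (s + 1) * k ≤ B - 2 := Nat.le_sub_of_add_le hB
  have hBpos : 0 < B := by omega
  have hkB : k ≤ B - 2 := le_trans (Nat.le_mul_of_pos_left k (Nat.succ_pos s)) hXk
  have hg2 : ∀ x : Γ, g x ≤ B - 2 := fun x => le_trans (hgr x).2 hkB
  have hg1 : ∀ x : Γ, 1 ≤ g x := fun x => (hgr x).1
  have hdUb : ∀ (q0 : Q) (x : Γ), f q0 * k + g x ≤ B - 2 := by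
    intro q0 x
    refine le_trans ?_ hXk
    have h1 : f q0 * k ≤ s * k := Nat.mul_le_mul_right k (hfr q0).2
    have h2 : g x ≤ k := (hgr x).2
    have h3 : (s + 1) * k = s * k + k := by ring
    omega
  have hdLb : ∀ (q0 : Q) (x : Γ), k + 1 ≤ f q0 * k + g x := by
    intro q0 x
    have h1 : k ≤ f q0 * k := Nat.le_mul_of_pos_left k (hfr q0).1
    have h2 := (hgr x).1
    omega
  have hQ2 : 2 ≤ B ^ T := le_trans hB2 (Nat.le_self_pow (by omega) B)
  have hB1T : B ≤ B ^ (T - 1) := by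
    calc B = B ^ 1 := (pow_one B).symm
      _ ≤ B ^ (T - 1) := Nat.pow_le_pow_right (by omega) (by omega)
  set m := (T - j - 1) * T with hm
  have hTm : (T - j) * T = T + m := by
    rw [hm]
    conv_lhs => rw [show T - j = (T - j - 1) + 1 from by omega]
    ring
  have hmlow : TM.low B T j = B ^ m := by unfold TM.low; rw [if_pos hjT']
  have hBm : 1 ≤ B ^ m := Nat.one_le_pow _ _ hBpos
  set S := ∑ r ∈ Finset.Icc i T, g (a r) * B ^ (T - r) with hS
  have hW2 : W' = (S * B ^ T + u) * B ^ m := by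
    rw [hW', hTm, pow_add]; ring
  set G := g (a i) * B ^ (T - i) with hG
  have hGS : G ≤ S :=
    Finset.single_le_sum (f := fun r => g (a r) * B ^ (T - r))
      (fun r _ => Nat.zero_le _) (Finset.mem_Icc.mpr ⟨le_refl i, hiT⟩)
  have hG1 : 1 ≤ G := by
    have := Nat.mul_le_mul (hg1 (a i)) (Nat.one_le_pow (T - i) B hBpos)
    simpa using this
  have hsum : ∀ i0, 1 ≤ i0 →
      (∑ r ∈ Finset.Icc i0 T, g (a r) * B ^ (T - r)) + 1 ≤ (B - 1) * B ^ (T - i0) :=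
    fun i0 h1 =>
      digit_sum_le B T hB2 (fun r => g (a r)) (fun r => hg2 (a r)) (T + 1) i0 (by omega) h1
  have hS1 : S + 1 ≤ (B - 1) * B ^ (T - i) := hsum i hi1
  have hstep : ∀ e : ℕ, (B - 1) * B ^ e + 1 ≤ B ^ (e + 1) := by
    intro e
    have hP : 1 ≤ B ^ e := Nat.one_le_pow _ _ hBpos
    have h1 : (B - 1) * B ^ e + 1 * B ^ e ≤ B * B ^ e := by
      have : (B - 1 + 1) * B ^ e ≤ B * B ^ e := mul_le_mul_left (by omega) _
      have e2 : (B - 1 + 1) * B ^ e = (B - 1) * B ^ e + 1 * B ^ e := by ring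
      omega
    have h2 : B * B ^ e = B ^ (e + 1) := by rw [pow_succ]; ring
    omega
  have hSQ : S + 2 ≤ B ^ T := by
    have h2 : (B - 1) * B ^ (T - i) ≤ (B - 1) * B ^ (T - 1) :=
      Nat.mul_le_mul_left _ (Nat.pow_le_pow_right (by omega) (by omega))
    have h3 := hstep (T - 1)
    rw [show T - 1 + 1 = T by omega] at h3
    omega
  have hS2pow : S + 2 ≤ B ^ (T - i + 1) := by
    have h3 := hstep (T - i)
    omega
  have hStail : i < T → S + 2 ≤ G + B ^ (T - i) := by
    intro hiT'
    have hsplit : S = G + ∑ r ∈ Finset.Icc (i+1) T, g (a r) * B ^ (T - r) := by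
      rw [hS, icc_split i T hiT (fun r => g (a r) * B ^ (T - r)), hG]
    have h2 := hsum (i+1) (by omega)
    rw [show T - (i+1) = T - i - 1 by omega] at h2
    have h4 := hstep (T - i - 1)
    rw [show T - i - 1 + 1 = T - i by omega] at h4
    omega
  have hu1 : u + 1 ≤ B ^ T := hu
  have hu2 : u + B ^ (T - 1) < B ^ T := by
    have hPpos : 0 < B ^ (T - 1) := Nat.one_le_pow _ _ hBpos
    have hBT : B ^ T = B ^ (T - 1) * B := by rw [← pow_succ]; congr 1; omega
    have hBT2 : B ^ T = B * B ^ (T - 1) := by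
      rw [← pow_succ']; congr 1; omega
    have hdivlt : u / B ^ (T - 1) < B := by
      rw [Nat.div_lt_iff_lt_mul hPpos, ← hBT2]; exact hu
    have hdig := hud (T - 1)
    rw [Nat.mod_eq_of_lt hdivlt] at hdig
    have htop : u / B ^ (T - 1) ≤ B - 2 := le_trans hdig hXk
    have hmod : u % B ^ (T - 1) < B ^ (T - 1) := Nat.mod_lt _ hPpos
    have hdm : B ^ (T - 1) * (u / B ^ (T - 1)) + u % B ^ (T - 1) = u := Nat.div_add_mod u _
    have hq : B ^ (T - 1) * (u / B ^ (T - 1)) ≤ B ^ (T - 1) * (B - 2) :=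
      Nat.mul_le_mul_left _ htop
    have hexp : B ^ (T - 1) * (B - 2) + 2 * B ^ (T - 1) = B ^ T := by
      have h5 : B ^ (T - 1) * (B - 2) = B ^ (T - 1) * B - B ^ (T - 1) * 2 := Nat.mul_sub ..
      have h6 : 2 * B ^ (T - 1) ≤ B ^ (T - 1) * B := by
        have : B ^ (T - 1) * 2 ≤ B ^ (T - 1) * B := Nat.mul_le_mul_left _ hB2
        omega
      omega
    omega
  have hGQ : G + 1 ≤ B ^ T := by
    have h1 : G ≤ (B - 2) * B ^ (T - 1) := by
      rw [hG]
      exact Nat.mul_le_mul (hg2 (a i)) (Nat.pow_le_pow_right (by omega) (by omega))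
    have h2 := two_digit_lt B (T - 2) (B - 2) 0 hB2 (le_refl _) (by omega)
    rw [show T - 2 + 1 = T - 1 by omega, show T - 2 + 2 = T by omega] at h2
    simp only [zero_mul, add_zero] at h2
    omega
  have hc : TM.cCopy g B T (a i) i j = G * ((B ^ T - 1) * B ^ m) := by
    unfold TM.cCopy
    rw [hmlow, hTm, pow_add, ← hG]
    rw [Nat.sub_mul, one_mul, Nat.mul_sub]
  have hgoal1 : TM.cCopy g B T (a i) i j ≤ W' := by
    rw [hc, hW2]
    calc G * ((B ^ T - 1) * B ^ m) ≤ S * ((B ^ T - 1) * B ^ m) := mul_le_mul_left hGS _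
      _ ≤ S * (B ^ T * B ^ m) := mul_le_mul_right (mul_le_mul_left (Nat.sub_le _ _) _) _
      _ = S * B ^ T * B ^ m := by ring
      _ ≤ (S * B ^ T + u) * B ^ m := mul_le_mul_left (Nat.le_add_right _ _) _
  have hmem : TM.cCopy g B T (a i) i j ∈ TM.coinSet M f g k B T :=
    Or.inl ⟨a i, i, j, hi1, hiT, hj1, by omega, rfl⟩
  have hWlt : W' + 1 ≤ (B ^ T - 1) * (B ^ T * B ^ m) := by
    have h2 : (S + 2) * B ^ T ≤ B ^ T * B ^ T := mul_le_mul_left hSQ _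
    have h3 : (S + 2) * B ^ T = S * B ^ T + 2 * B ^ T := by ring
    have h5 : (B ^ T - 1) * B ^ T = B ^ T * B ^ T - B ^ T := by
      rw [Nat.sub_mul, one_mul]
    have h6 : S * B ^ T + u + 1 ≤ (B ^ T - 1) * B ^ T := by omega
    rw [hW2]
    calc (S * B ^ T + u) * B ^ m + 1 ≤ (S * B ^ T + u + 1) * B ^ m := by
          have e : (S * B ^ T + u + 1) * B ^ m = (S * B ^ T + u) * B ^ m + 1 * B ^ m := by ring
          omega
      _ ≤ ((B ^ T - 1) * B ^ T) * B ^ m := mul_le_mul_left h6 _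
      _ = (B ^ T - 1) * (B ^ T * B ^ m) := by ring
  have hub : ∀ c' ∈ TM.coinSet M f g k B T, c' ≤ W' → c' ≤ TM.cCopy g B T (a i) i j := by
    have hVBT1 : ∀ V : ℕ, 1 ≤ V → B ^ T - 1 + V ≤ V * B ^ T := by
      intro V h1
      obtain ⟨V1, rfl⟩ : ∃ t, V = t + 1 := ⟨V - 1, by omega⟩
      have h2 : V1 * 1 ≤ V1 * B ^ T := Nat.mul_le_mul_left _ (by omega)
      have h3 : (V1 + 1) * B ^ T = V1 * B ^ T + B ^ T := by ring
      omega
    have hVBT2 : ∀ V V' : ℕ, 2 ≤ V → V' + 1 ≤ B ^ T → B ^ T - 1 + V' ≤ V * B ^ T := by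
      intro V V' h1 h2
      have h3 : 2 * B ^ T ≤ V * B ^ T := mul_le_mul_left h1 _
      have h5 : 2 * B ^ T = B ^ T + B ^ T := by ring
      omega
    have levelA : ∀ V V' j', 1 ≤ j' → j' < j →
        B ^ T - 1 + V' ≤ V * B ^ T →
        V * B ^ ((T - j') * T) - V' * TM.low B T j' ≤ W' → False := by
      intro V V' j' hj'1 hj'j h3 hle
      have hj'T : j' < T := by omega
      have hlow' : TM.low B T j' = B ^ ((T - j' - 1) * T) := by
        unfold TM.low; rw [if_pos hj'T]
      have hexp : (T - j') * T = T + (T - j' - 1) * T := by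
        conv_lhs => rw [show T - j' = (T - j' - 1) + 1 from by omega]
        ring
      have hle2 : V * (B ^ T * B ^ ((T - j' - 1) * T)) ≤ W' + V' * B ^ ((T - j' - 1) * T) := by
        have h0 := Nat.sub_le_iff_le_add.mp hle
        rw [hlow', hexp, pow_add] at h0
        exact h0
      have hem : B ^ T * B ^ m ≤ B ^ ((T - j' - 1) * T) := by
        rw [← pow_add]
        apply Nat.pow_le_pow_right (by omega)
        calc T + m = (T - j) * T := hTm.symm
          _ ≤ (T - j' - 1) * T := Nat.mul_le_mul_right T (by omega)
      have h4 : (B ^ T - 1) * B ^ ((T - j' - 1) * T) + V' * B ^ ((T - j' - 1) * T)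
          ≤ V * (B ^ T * B ^ ((T - j' - 1) * T)) := by
        calc (B ^ T - 1) * B ^ ((T - j' - 1) * T) + V' * B ^ ((T - j' - 1) * T)
            = (B ^ T - 1 + V') * B ^ ((T - j' - 1) * T) := by ring
          _ ≤ (V * B ^ T) * B ^ ((T - j' - 1) * T) := mul_le_mul_left h3 _
          _ = V * (B ^ T * B ^ ((T - j' - 1) * T)) := by ring
      have h5 : W' + 1 ≤ (B ^ T - 1) * B ^ ((T - j' - 1) * T) :=
        le_trans hWlt (Nat.mul_le_mul_left _ hem)
      omega
    have levelC : ∀ V V' j', j < j' → V + 1 ≤ B ^ T →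
        V * B ^ ((T - j') * T) - V' * TM.low B T j' ≤ TM.cCopy g B T (a i) i j := by
      intro V V' j' hjj' hV
      have h1 : B ^ ((T - j') * T) ≤ B ^ m :=
        Nat.pow_le_pow_right (by omega) (by
          rw [hm]; exact Nat.mul_le_mul_right T (by omega))
      have h2 : 1 * (B ^ T - 1) ≤ G * (B ^ T - 1) := mul_le_mul_left hG1 _
      calc V * B ^ ((T - j') * T) - V' * TM.low B T j'
          ≤ V * B ^ ((T - j') * T) := Nat.sub_le _ _
        _ ≤ (B ^ T - 1) * B ^ m := Nat.mul_le_mul (by omega) h1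
        _ ≤ G * (B ^ T - 1) * B ^ m := mul_le_mul_left (by omega) _
        _ = G * ((B ^ T - 1) * B ^ m) := by ring
        _ = TM.cCopy g B T (a i) i j := hc.symm
    have levelJto : ∀ V V', V * B ^ ((T - j) * T) - V' * TM.low B T j ≤ W' →
        V * B ^ T ≤ S * B ^ T + u + V' := by
      intro V V' hle
      have h0 := Nat.sub_le_iff_le_add.mp hle
      rw [hmlow, hTm, pow_add, hW2] at h0
      have h1 : (V * B ^ T) * B ^ m ≤ (S * B ^ T + u + V') * B ^ m := by
        calc (V * B ^ T) * B ^ m = V * (B ^ T * B ^ m) := by ring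
          _ ≤ (S * B ^ T + u) * B ^ m + V' * B ^ m := h0
          _ = (S * B ^ T + u + V') * B ^ m := by ring
      exact Nat.le_of_mul_le_mul_right h1 (by omega)
    have levelJbig : ∀ V V', S + 2 ≤ V → V' + 1 ≤ B ^ T →
        V * B ^ T ≤ S * B ^ T + u + V' → False := by
      intro V V' h1 h2 h3
      have h4 : (S + 2) * B ^ T ≤ V * B ^ T := mul_le_mul_left h1 _
      have h5 : (S + 2) * B ^ T = S * B ^ T + 2 * B ^ T := by ring
      omega
    have levelJsmall : ∀ V V', V + 1 ≤ G →
        V * B ^ ((T - j) * T) - V' * TM.low B T j ≤ TM.cCopy g B T (a i) i j := by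
      intro V V' hVG
      have h1 : (V + 1) * B ^ T = V * B ^ T + B ^ T := by ring
      have h1' : (V + 1) * B ^ T ≤ G * B ^ T := mul_le_mul_left hVG _
      have h2 : G * (B ^ T - 1) = G * B ^ T - G * 1 := Nat.mul_sub ..
      have h3 : V * B ^ T ≤ G * (B ^ T - 1) := by
        rw [h2, mul_one]
        apply Nat.le_sub_of_add_le
        omega
      calc V * B ^ ((T - j) * T) - V' * TM.low B T j
          ≤ V * B ^ ((T - j) * T) := Nat.sub_le _ _
        _ = V * B ^ T * B ^ m := by rw [hTm, pow_add]; ring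
        _ ≤ G * (B ^ T - 1) * B ^ m := mul_le_mul_left h3 _
        _ = G * ((B ^ T - 1) * B ^ m) := by ring
        _ = TM.cCopy g B T (a i) i j := hc.symm
    have levelJcopy : ∀ V, V ≤ G →
        V * B ^ ((T - j) * T) - V * TM.low B T j ≤ TM.cCopy g B T (a i) i j := by
      intro V hVG
      rw [hmlow, hTm, pow_add, hc]
      have e1 : V * (B ^ T * B ^ m) - V * B ^ m = V * ((B ^ T - 1) * B ^ m) := by
        rw [Nat.sub_mul, one_mul, Nat.mul_sub]
      rw [e1]
      exact mul_le_mul_left hVG _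
    intro c' hmem' hle
    simp only [TM.coinSet, Set.mem_setOf_eq] at hmem'
    rcases hmem' with ⟨a', i', j', hi'1, hi'T, hj'1, hj'T', rfl⟩ |
      ⟨q0, am, a', ap, i', j', h2i, hi'T1, hj'1, hj'T', rfl⟩ |
      ⟨q0, ap, j', hqH, hj'1, hj'T', rfl⟩
    · -- copy coin
      have hVQ : g a' * B ^ (T - i') + 1 ≤ B ^ T := by
        have h1 : g a' * B ^ (T - i') ≤ (B - 2) * B ^ (T - 1) :=
          Nat.mul_le_mul (hg2 a') (Nat.pow_le_pow_right (by omega) (by omega))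
        have h2 := two_digit_lt B (T - 2) (B - 2) 0 hB2 (le_refl _) (by omega)
        rw [show T - 2 + 1 = T - 1 by omega, show T - 2 + 2 = T by omega] at h2
        simp only [zero_mul, add_zero] at h2
        omega
      have hV1 : 1 ≤ g a' * B ^ (T - i') := by
        have := Nat.mul_le_mul (hg1 a') (Nat.one_le_pow (T - i') B hBpos)
        simpa using this
      unfold TM.cCopy at hle ⊢
      rcases lt_trichotomy j' j with hj' | hj' | hj'
      · exact (levelA _ _ j' hj'1 hj' (hVBT1 _ hV1) hle).elim
      · subst hj'
        by_cases hVG : g a' * B ^ (T - i') ≤ G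
        · exact levelJcopy _ hVG
        · exfalso
          push_neg at hVG
          have hle' := levelJto _ _ hle
          rcases lt_trichotomy i' i with hii | hii | hii
          · have h2 : B ^ (T - i + 1) ≤ B ^ (T - i') :=
              Nat.pow_le_pow_right (by omega) (by omega)
            have h3 : 1 * B ^ (T - i') ≤ g a' * B ^ (T - i') :=
              mul_le_mul_left (hg1 a') _
            exact levelJbig (g a' * B ^ (T - i')) _ (by omega) hVQ hle'
          · rw [hii] at hVQ hle' hVG
            have hgi : g (a i) + 1 ≤ g a' := by
              by_contra hcon
              push_neg at hcon
              have h := mul_le_mul_left (show g a' ≤ g (a i) by omega) (B ^ (T - i))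
              rw [← hG] at h
              omega
            rcases Nat.lt_or_ge i T with hiT' | hiT'
            · have h1 := hStail hiT'
              have h2 : (g (a i) + 1) * B ^ (T - i) ≤ g a' * B ^ (T - i) :=
                mul_le_mul_left hgi _
              have h3 : (g (a i) + 1) * B ^ (T - i) = G + B ^ (T - i) := by rw [hG]; ring
              exact levelJbig (g a' * B ^ (T - i)) _ (by omega) hVQ hle'
            · have hieq : i = T := by omega
              have hSG : S = G := by
                rw [hS, hG, hieq, Finset.Icc_self, Finset.sum_singleton]
              have hz : T - i = 0 := by omega
              have hVa : g a' * B ^ (T - i) = g a' := by rw [hz, pow_zero, mul_one]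
              have hGa : G = g (a i) := by rw [hG, hz, pow_zero, mul_one]
              have hSV : S + 1 ≤ g a' * B ^ (T - i) := by omega
              have h4 : (S + 1) * B ^ T ≤ g a' * B ^ (T - i) * B ^ T :=
                mul_le_mul_left hSV _
              have h5 : (S + 1) * B ^ T = S * B ^ T + B ^ T := by ring
              have hVk : g a' * B ^ (T - i) ≤ B - 2 := by rw [hVa]; exact hg2 a'
              omega
          · have h1 : g a' * B ^ (T - i') ≤ (B - 2) * B ^ (T - i - 1) :=
              Nat.mul_le_mul (hg2 a') (Nat.pow_le_pow_right (by omega) (by omega))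
            have h2 : B ^ (T - i) = B ^ (T - i - 1) * B := by rw [← pow_succ]; congr 1; omega
            have h3 : 1 * B ^ (T - i) ≤ G := by rw [hG]; exact mul_le_mul_left (hg1 (a i)) _
            have h4 : (B - 2) * B ^ (T - i - 1) + B ^ (T - i - 1) ≤ B ^ (T - i) := by
              have h5 : (B - 2 + 1) * B ^ (T - i - 1) ≤ B * B ^ (T - i - 1) :=
                mul_le_mul_left (by omega) _
              have e : (B - 2 + 1) * B ^ (T - i - 1)
                  = (B - 2) * B ^ (T - i - 1) + 1 * B ^ (T - i - 1) := by ring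
              have e2 : B * B ^ (T - i - 1) = B ^ (T - i) := by rw [h2]; ring
              omega
            have h5 : 1 ≤ B ^ (T - i - 1) := Nat.one_le_pow _ _ hBpos
            omega
      · exact levelC _ _ j' hj' hVQ
    · -- transition coin
      have hE1 : T - i' - 1 + 1 = T - i' := by omega
      have hE2 : T - i' - 1 + 2 = T - i' + 1 := by omega
      have hE3 : T - i' - 1 + 3 = T - i' + 2 := by omega
      have hthree : ∀ d1 d2 d3 : ℕ, d1 ≤ B - 2 → d2 ≤ B - 2 → d3 ≤ B - 2 →
          d1 * B ^ (T - i' + 1) + d2 * B ^ (T - i') + d3 * B ^ (T - i' - 1) + 1 ≤ B ^ T := by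
        intro d1 d2 d3 h1 h2 h3
        have h4 := three_digit_lt B (T - i' - 1) d1 d2 d3 hB2 h1 h2 h3
        rw [hE1, hE2, hE3] at h4
        have h5 : B ^ (T - i' + 2) ≤ B ^ T := Nat.pow_le_pow_right (by omega) (by omega)
        omega
      have hVQ : TM.transUpper f g k B T q0 am a' ap i' + 1 ≤ B ^ T := by
        unfold TM.transUpper
        exact hthree _ _ _ (hg2 am) (hdUb q0 a') (hg2 ap)
      have hV'Q : TM.transLower M f g k B T q0 am a' ap i' + 1 ≤ B ^ T := by
        unfold TM.transLower
        dsimp only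
        split_ifs with hH hdir
        · exact hVQ
        · exact hthree _ _ _ (hg2 am) (hg2 _) (hdUb _ ap)
        · exact hthree _ _ _ (hdUb _ am) (hg2 _) (hg2 ap)
      have hV2 : 2 ≤ TM.transUpper f g k B T q0 am a' ap i' := by
        unfold TM.transUpper
        have h1 : 1 ≤ f q0 * k + g a' := by have := hdLb q0 a'; omega
        have h2 : B ≤ B ^ (T - i') := by
          calc B = B ^ 1 := (pow_one B).symm
            _ ≤ B ^ (T - i') := Nat.pow_le_pow_right (by omega) (by omega)
        have h3 : 1 * B ≤ (f q0 * k + g a') * B ^ (T - i') := Nat.mul_le_mul h1 h2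
        omega
      unfold TM.cTrans at hle ⊢
      rcases lt_trichotomy j' j with hj' | hj' | hj'
      · exact (levelA _ _ j' hj'1 hj' (hVBT2 _ _ hV2 hV'Q) hle).elim
      · subst hj'
        rcases lt_trichotomy (T - i' + 1) (T - i) with hcmp | hcmp | hcmp
        · apply levelJsmall
          have h4 := three_digit_lt B (T - i' - 1) (g am) (f q0 * k + g a') (g ap) hB2
            (hg2 am) (hdUb q0 a') (hg2 ap)
          rw [hE1, hE2, hE3] at h4
          have h5 : B ^ (T - i' + 2) ≤ B ^ (T - i) :=
            Nat.pow_le_pow_right (by omega) (by omega)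
          have h6 : 1 * B ^ (T - i) ≤ G := by rw [hG]; exact mul_le_mul_left (hg1 (a i)) _
          unfold TM.transUpper
          omega
        · have hiT' : i < T := by omega
          rcases lt_trichotomy (g am) (g (a i)) with hgam | hgam | hgam
          · apply levelJsmall
            unfold TM.transUpper
            have h4 := two_digit_lt B (T - i' - 1) (f q0 * k + g a') (g ap) hB2
              (hdUb q0 a') (hg2 ap)
            rw [hE1, hE2] at h4
            have h5 : (g am + 1) * B ^ (T - i' + 1) ≤ g (a i) * B ^ (T - i' + 1) :=
              mul_le_mul_left (by omega) _
            have h6 : (g am + 1) * B ^ (T - i' + 1)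
                = g am * B ^ (T - i' + 1) + 1 * B ^ (T - i' + 1) := by ring
            have h7 : g (a i) * B ^ (T - i' + 1) = G := by rw [hG, hcmp]
            omega
          · exfalso
            have hle' := levelJto _ _ hle
            have hi2T : i + 2 ≤ T := by omega
            have hsp1 : S = G + ∑ r ∈ Finset.Icc (i+1) T, g (a r) * B ^ (T - r) := by
              rw [hS, icc_split i T hiT (fun r => g (a r) * B ^ (T - r)), hG]
            have hsp2 : ∑ r ∈ Finset.Icc (i+1) T, g (a r) * B ^ (T - r)
                = g (a (i+1)) * B ^ (T - (i+1))
                  + ∑ r ∈ Finset.Icc (i+2) T, g (a r) * B ^ (T - r) := by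
              rw [icc_split (i+1) T (by omega) (fun r => g (a r) * B ^ (T - r))]
            rw [show T - (i+1) = T - i' from by omega] at hsp2
            have h8 := hsum (i+2) (by omega)
            rw [show T - (i+2) = T - i' - 1 from by omega] at h8
            have h9 := hstep (T - i' - 1)
            rw [hE1] at h9
            have h10 : g (a (i+1)) + 1 ≤ f q0 * k + g a' := by
              have := hdLb q0 a'; have := (hgr (a (i+1))).2; omega
            have h11 : (g (a (i+1)) + 1) * B ^ (T - i') ≤ (f q0 * k + g a') * B ^ (T - i') :=
              mul_le_mul_left h10 _
            have h12 : (g (a (i+1)) + 1) * B ^ (T - i')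
                = g (a (i+1)) * B ^ (T - i') + 1 * B ^ (T - i') := by ring
            have h13 : g am * B ^ (T - i' + 1) = G := by rw [hgam, hG, hcmp]
            have hSle : S + 2 ≤ TM.transUpper f g k B T q0 am a' ap i' := by
              unfold TM.transUpper
              omega
            exact levelJbig _ _ hSle hV'Q hle'
          · exfalso
            have hle' := levelJto _ _ hle
            have h1 := hStail hiT'
            have h5 : (g (a i) + 1) * B ^ (T - i) ≤ g am * B ^ (T - i) :=
              mul_le_mul_left (by omega) _
            have h6 : (g (a i) + 1) * B ^ (T - i) = G + B ^ (T - i) := by rw [hG]; ring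
            have h7 : g am * B ^ (T - i) = g am * B ^ (T - i' + 1) := by rw [hcmp]
            have hSle : S + 2 ≤ TM.transUpper f g k B T q0 am a' ap i' := by
              unfold TM.transUpper
              omega
            exact levelJbig _ _ hSle hV'Q hle'
        · exfalso
          have hle' := levelJto _ _ hle
          have h2 : B ^ (T - i + 1) ≤ B ^ (T - i' + 1) :=
            Nat.pow_le_pow_right (by omega) (by omega)
          have h3 : 1 * B ^ (T - i' + 1) ≤ g am * B ^ (T - i' + 1) :=
            mul_le_mul_left (hg1 am) _
          have hSle : S + 2 ≤ TM.transUpper f g k B T q0 am a' ap i' := by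
            unfold TM.transUpper
            omega
          exact levelJbig _ _ hSle hV'Q hle'
      · exact levelC _ _ j' hj' hVQ
    · -- left coin
      have hE1 : T - 2 + 1 = T - 1 := by omega
      have hE2 : T - 2 + 2 = T := by omega
      have htwo : ∀ d1 d2 : ℕ, d1 ≤ B - 2 → d2 ≤ B - 2 →
          d1 * B ^ (T - 1) + d2 * B ^ (T - 2) + 1 ≤ B ^ T := by
        intro d1 d2 h1 h2
        have h4 := two_digit_lt B (T - 2) d1 d2 hB2 h1 h2
        rw [hE1, hE2] at h4
        exact h4
      have hVQ : (f q0 * k + g M.dollar) * B ^ (T - 1) + g ap * B ^ (T - 2) + 1 ≤ B ^ T :=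
        htwo _ _ (hdUb q0 M.dollar) (hg2 ap)
      have hV'Q : g M.dollar * B ^ (T - 1)
          + (f (M.δ q0 M.dollar).1 * k + g ap) * B ^ (T - 2) + 1 ≤ B ^ T :=
        htwo _ _ (hg2 M.dollar) (hdUb _ ap)
      have hV2 : 2 ≤ (f q0 * k + g M.dollar) * B ^ (T - 1) + g ap * B ^ (T - 2) := by
        have h1 : 1 ≤ f q0 * k + g M.dollar := by have := hdLb q0 M.dollar; omega
        have h3 : 1 * B ≤ (f q0 * k + g M.dollar) * B ^ (T - 1) := Nat.mul_le_mul h1 hB1T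
        omega
      unfold TM.cLeft at hle ⊢
      rcases lt_trichotomy j' j with hj' | hj' | hj'
      · exact (levelA _ _ j' hj'1 hj' (hVBT2 _ _ hV2 hV'Q) hle).elim
      · subst hj'
        exfalso
        have hle' := levelJto _ _ hle
        have hSle : S + 2 ≤ (f q0 * k + g M.dollar) * B ^ (T - 1) + g ap * B ^ (T - 2) := by
          have hk1 : (k + 1) * B ^ (T - 1) ≤ (f q0 * k + g M.dollar) * B ^ (T - 1) :=
            mul_le_mul_left (hdLb q0 M.dollar) _
          have hk2 : (k + 1) * B ^ (T - 1) = k * B ^ (T - 1) + 1 * B ^ (T - 1) := by ring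
          rcases Nat.lt_or_ge 1 i with hi2 | hi2
          · have h2 : B ^ (T - i + 1) ≤ B ^ (T - 1) :=
              Nat.pow_le_pow_right (by omega) (by omega)
            have h5 : 1 ≤ B ^ (T - 1) := Nat.one_le_pow _ _ hBpos
            omega
          · have hieq : i = 1 := by omega
            have h1 := hStail (by omega)
            have h4 : G ≤ k * B ^ (T - i) := by
              rw [hG]; exact mul_le_mul_left (hgr (a i)).2 _
            rw [show T - i = T - 1 from by omega] at h1 h4
            omega
        exact levelJbig _ _ hSle hV'Q hle'
      · exact levelC _ _ j' hj' hVQ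
  have hgreat : IsGreatest {c | c ∈ TM.coinSet M f g k B T ∧ c ≤ W'}
      (TM.cCopy g B T (a i) i j) :=
    ⟨⟨hmem, hgoal1⟩, fun c' hc' => hub c' hc'.1 hc'.2⟩
  exact ⟨hgoal1, hgreat, hgreat.csSup_eq⟩
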